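/- Fix n ≥ 2 and 1 ≤ i ≤ n-1. The map deleting the second letter i+1 of π and decreasing every letter greater than i by one is a bijection from the set of permutations of [n] avoiding {1324, 1342} with π_1 = i and π_2 = i+1, onto the set of permutations of [n-1] avoiding {1324, 1342} with first letter i. Moreover this map preserves the number of descents. -/

import Mathlib

/-- The word `w` contains the pattern `p`: some subsequence of `w` is
order-isomorphic to `p`. -/
def ContainsPat (w p : List ℕ) : Prop :=
  ∃ s : List ℕ, s.Sublist w ∧ s.length = p.length ∧
    ∀ i j : ℕ, i < p.length → j < p.length → (s[i]! < s[j]! ↔ p[i]! < p[j]!)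

/-- The word `w` avoids the pattern `p`. -/
def AvoidsPat (w p : List ℕ) : Prop := ¬ ContainsPat w p

/-- `π` is the one-line notation of a permutation of `{1,…,n}`. -/
def IsPermList (n : ℕ) (π : List ℕ) : Prop :=
  π.Perm ((List.range n).map (· + 1))

/-- The number of descents of a word. -/
def descList (π : List ℕ) : ℕ :=
  ((List.range (π.length - 1)).filter (fun t => decide (π[t + 1]! < π[t]!))).length

/-- Decrease every letter greater than `i` by one. -/
def reduceGt (i : ℕ) (l : List ℕ) : List ℕ := l.map (fun x => if i < x then x - 1 else x)


def unreduceGt (i : ℕ) (l : List ℕ) : List ℕ := l.map (fun x => if i < x then x + 1 else x)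

lemma red_lt_iff (i x y : ℕ) (hx : x ≠ i+1) (hy : y ≠ i+1) :
    ((if i < x then x - 1 else x) < (if i < y then y - 1 else y)) ↔ x < y := by
  split <;> split <;> omega

lemma unred_red (i : ℕ) (l : List ℕ) (h : ∀ x ∈ l, x ≠ i+1) :
    unreduceGt i (reduceGt i l) = l := by
  unfold unreduceGt reduceGt
  rw [List.map_map]
  have h2 : ∀ x ∈ l, ((fun x => if i < x then x + 1 else x) ∘ fun x => if i < x then x - 1 else x) x = id x := by
    intro x hx; have := h x hx; simp only [Function.comp, id]; split_ifs <;> omega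
  rw [List.map_congr_left h2, List.map_id]

lemma red_unred (i : ℕ) (l : List ℕ) : reduceGt i (unreduceGt i l) = l := by
  unfold unreduceGt reduceGt
  rw [List.map_map]
  have : ∀ x ∈ l, ((fun x => if i < x then x - 1 else x) ∘ fun x => if i < x then x + 1 else x) x = id x := by
    intro x _; simp only [Function.comp, id]; split_ifs <;> omega
  rw [List.map_congr_left this, List.map_id]

lemma unred_ne (i x : ℕ) : (if i < x then x + 1 else x) ≠ i + 1 := by split <;> omega

lemma getElem!_map (f : ℕ → ℕ) (l : List ℕ) (k : ℕ) (h : k < l.length) :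
    (l.map f)[k]! = f l[k]! := by
  rw [getElem!_pos l k h, getElem!_pos (l.map f) k (by simpa using h), List.getElem_map]

lemma mem_of_getElem! (l : List ℕ) (k : ℕ) (h : k < l.length) : l[k]! ∈ l := by
  rw [getElem!_pos l k h]; exact List.getElem_mem h

lemma contains_of_sublist {w w' p : List ℕ} (hw : w.Sublist w') (h : ContainsPat w p) :
    ContainsPat w' p := by
  obtain ⟨s, hs, hl, hiso⟩ := h
  exact ⟨s, hs.trans hw, hl, hiso⟩

lemma contains_reduce_iff (i : ℕ) (l p : List ℕ) (h : ∀ x ∈ l, x ≠ i+1) :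
    ContainsPat (reduceGt i l) p ↔ ContainsPat l p := by
  constructor
  · rintro ⟨s, hs, hl, hiso⟩
    obtain ⟨s', hs', rfl⟩ := List.sublist_map_iff.mp hs
    refine ⟨s', hs', by simpa using hl, fun a b ha hb => ?_⟩
    have hla : a < s'.length := by simp at hl; omega
    have hlb : b < s'.length := by simp at hl; omega
    rw [← hiso a b ha hb, getElem!_map _ _ _ hla, getElem!_map _ _ _ hlb,
      red_lt_iff i _ _ (h _ (hs'.subset (mem_of_getElem! _ _ hla)))
        (h _ (hs'.subset (mem_of_getElem! _ _ hlb)))]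
  · rintro ⟨s, hs, hl, hiso⟩
    refine ⟨reduceGt i s, hs.map _, by simpa [reduceGt] using hl, fun a b ha hb => ?_⟩
    have hla : a < s.length := by omega
    have hlb : b < s.length := by omega
    rw [← hiso a b ha hb]
    unfold reduceGt
    rw [getElem!_map _ _ _ hla, getElem!_map _ _ _ hlb,
      red_lt_iff i _ _ (h _ (hs.subset (mem_of_getElem! _ _ hla)))
        (h _ (hs.subset (mem_of_getElem! _ _ hlb)))]

lemma transfer (i : ℕ) (t p : List ℕ) (hp4 : p.length = 4)
    (h0 : ∀ j, 0 < j → j < 4 → p[0]! < p[j]!)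
    (hmid : ∃ j, 1 < j ∧ j < 4 ∧ p[0]! < p[j]! ∧ p[j]! < p[1]!) :
    ContainsPat (i::(i+1)::t) p ↔ ContainsPat (i::t) p := by
  constructor
  · rintro ⟨s, hs, hl, hiso⟩
    rw [hp4] at hl
    cases hs with
    | cons _ h1 =>
      cases h1 with
      | cons _ h2 => exact ⟨s, h2.cons i, by omega, hiso⟩
      | cons_cons _ h2 =>
        -- s = (i+1) :: s₁, h2 : s₁ <+ t
        rename_i s₁
        have hl1 : s₁.length = 3 := by simpa using hl
        have hgt : ∀ j, 0 < j → j < 4 → i + 1 < ((i+1)::s₁)[j]! := by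
          intro j hj0 hj4
          have := (hiso 0 j (by omega) (by omega)).mpr (h0 j hj0 hj4)
          simpa using this
        refine ⟨i::s₁, h2.cons_cons i, by simp [hl1, hp4], fun a b ha hb => ?_⟩
        rw [hp4] at ha hb
        match a, b with
        | 0, 0 => simp
        | 0, k+1 =>
          have h1 := hgt (k+1) (by omega) hb
          have h2 := h0 (k+1) (by omega) hb
          simp only [List.getElem!_cons_zero, List.getElem!_cons_succ] at h1 ⊢
          omega
        | k+1, 0 =>
          have h1 := hgt (k+1) (by omega) ha
          have h2 := h0 (k+1) (by omega) ha
          simp only [List.getElem!_cons_zero, List.getElem!_cons_succ] at h1 ⊢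
          omega
        | k+1, j+1 =>
          have := hiso (k+1) (j+1) (by omega) (by omega)
          simpa using this
    | cons_cons _ h1 =>
      cases h1 with
      | cons _ h2 =>
        rename_i s₁
        exact ⟨i::s₁, h2.cons_cons i, by simp at hl ⊢; omega, hiso⟩
      | cons_cons _ h2 =>
        -- s = i :: (i+1) :: s₂ : impossible
        exfalso
        obtain ⟨j, hj1, hj4, hj0, hj01⟩ := hmid
        have h1 := (hiso 0 j (by omega) (by omega)).mpr hj0
        have h2 := (hiso j 1 (by omega) (by omega)).mpr hj01
        simp only [List.getElem!_cons_zero, List.getElem!_cons_succ] at h1 h2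
        omega
  · exact fun h => contains_of_sublist (List.Sublist.cons_cons i (List.Sublist.cons (i+1) (List.Sublist.refl t))) h

lemma range_map_eq (n : ℕ) : (List.range n).map (· + 1) = List.range' 1 n := by
  rw [List.range'_eq_map_range]; simp [Nat.add_comm]

lemma perm_reduce (n i : ℕ) (h1 : 1 ≤ i) (h2 : i ≤ n - 1) (hn : 2 ≤ n) :
    reduceGt i (((List.range n).map (· + 1)).erase (i+1)) = (List.range (n-1)).map (· + 1) := by
  rw [range_map_eq, range_map_eq]
  have hsplit : List.range' 1 n = List.range' 1 i ++ List.range' (1 + i) (n - i) := by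
    have h := List.range'_append (s := 1) (m := i) (n := n - i) (step := 1)
    simp only [one_mul] at h
    rw [h]; congr 1; omega
  have hsucc : List.range' (1 + i) (n - i) = (i+1) :: List.range' (i + 2) (n - i - 1) := by
    have h := List.range'_succ (s := i + 1) (n := n - i - 1) (step := 1)
    rw [show (1:ℕ) + i = i + 1 by omega, show n - i = n - i - 1 + 1 by omega, h,
      show i + 1 + 1 = i + 2 by omega]
    congr 2
  rw [hsplit, hsucc]
  have hnm : (i+1) ∉ List.range' 1 i := by
    intro hmem; simp [List.mem_range'] at hmem; omega
  rw [List.erase_append_right _ hnm, List.erase_cons_head]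
  unfold reduceGt
  rw [List.map_append]
  have e1 : (List.range' 1 i).map (fun x => if i < x then x - 1 else x) = List.range' 1 i := by
    have : ∀ x ∈ List.range' 1 i, (fun x => if i < x then x - 1 else x) x = id x := by
      intro x hx; simp [List.mem_range'] at hx; simp; omega
    rw [List.map_congr_left this, List.map_id]
  have e2 : (List.range' (i + 2) (n - i - 1)).map (fun x => if i < x then x - 1 else x)
      = List.range' (i + 1) (n - i - 1) := by
    rw [List.range'_eq_map_range, List.range'_eq_map_range, List.map_map]
    apply List.map_congr_left
    intro x _; simp; omega
  rw [e1, e2]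
  have h := List.range'_append (s := 1) (m := i) (n := n - i - 1) (step := 1)
  simp only [one_mul] at h
  rw [show (1:ℕ) + i = i + 1 from by omega] at h
  rw [h]; congr 1; omega

lemma descList_cons_cons (a b : ℕ) (l : List ℕ) :
    descList (a::b::l) = (if b < a then 1 else 0) + descList (b::l) := by
  unfold descList
  rw [← List.countP_eq_length_filter, ← List.countP_eq_length_filter]
  simp only [List.length_cons, Nat.add_sub_cancel]
  rw [List.range_succ_eq_map, List.countP_cons, List.countP_map]
  have : ∀ x ∈ List.range l.length,
      ((fun t => decide ((a::b::l)[t + 1]! < (a::b::l)[t]!)) ∘ Nat.succ) x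
        = (fun t => decide ((b::l)[t + 1]! < (b::l)[t]!)) x := by
    intro x _
    simp [Nat.succ_eq_add_one]
  rw [List.countP_congr (by intro x hx; rw [this x hx])]
  simp [Nat.add_comm]

lemma descList_reduce (i : ℕ) : ∀ l : List ℕ, (∀ x ∈ l, x ≠ i+1) →
    descList (reduceGt i l) = descList l
  | [] => by intro _; simp [descList, reduceGt]
  | [a] => by intro _; simp [descList, reduceGt]
  | a :: b :: l => by
    intro h
    have ih := descList_reduce i (b :: l) (fun x hx => h x (List.mem_cons_of_mem _ hx))
    simp only [reduceGt, List.map_cons] at ih ⊢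
    rw [descList_cons_cons, descList_cons_cons, ih,
      if_congr (red_lt_iff i b a (h b (by simp)) (h a (by simp))) rfl rfl]

lemma desc_main (i : ℕ) (t : List ℕ) (hni : i ∉ t) (hni1 : (i+1) ∉ t) :
    descList (i::(i+1)::t) = descList (i :: reduceGt i t) := by
  match t with
  | [] => simp [descList, reduceGt]
  | c :: t' =>
    have hc : c ≠ i := by intro h; exact hni (h ▸ List.mem_cons_self (a := c) (l := t'))
    have hc1 : c ≠ i + 1 := by intro h; exact hni1 (h ▸ List.mem_cons_self (a := c) (l := t'))
    rw [descList_cons_cons, descList_cons_cons]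
    have hr : reduceGt i (c :: t') = (if i < c then c - 1 else c) :: reduceGt i t' := by
      simp [reduceGt]
    rw [hr, descList_cons_cons, ← hr,
      descList_reduce i (c :: t') (fun x hx => by intro hh; exact hni1 (hh ▸ hx))]
    have : (if c < i + 1 then 1 else 0) = (if (if i < c then c - 1 else c) < i then 1 else 0) := by
      split_ifs <;> omega
    rw [show (if i + 1 < i then 1 else 0) = 0 from by simp, this]
    omega

lemma nodup_base (n : ℕ) : ((List.range n).map (· + 1)).Nodup :=
  (List.nodup_range (n := n)).map (fun a b h => by omega)

lemma nodup_of_perm {n : ℕ} {π : List ℕ} (h : IsPermList n π) : π.Nodup :=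
  (h.symm.nodup_iff).mp (nodup_base n)

lemma exists_struct {n i : ℕ} (hn : 2 ≤ n) {π : List ℕ} (hperm : IsPermList n π)
    (h0 : π[0]! = i) (h1 : π[1]! = i+1) : ∃ t, π = i :: (i+1) :: t := by
  have hlen : π.length = n := by simpa using hperm.length_eq
  match π, hlen with
  | [], hlen => simp at hlen; omega
  | [a], hlen => simp at hlen; omega
  | a :: b :: t, _ =>
    simp only [List.getElem!_cons_zero, List.getElem!_cons_succ] at h0 h1
    exact ⟨t, by rw [h0, h1]⟩

lemma pat1_h0 : ∀ j, 0 < j → j < 4 → ([1,3,2,4] : List ℕ)[0]! < [1,3,2,4][j]! := by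
  intro j h1 h4; interval_cases j <;> simp

lemma pat2_h0 : ∀ j, 0 < j → j < 4 → ([1,3,4,2] : List ℕ)[0]! < [1,3,4,2][j]! := by
  intro j h1 h4; interval_cases j <;> simp

lemma pat1_hmid : ∃ j, 1 < j ∧ j < 4 ∧ ([1,3,2,4] : List ℕ)[0]! < [1,3,2,4][j]! ∧
    ([1,3,2,4] : List ℕ)[j]! < [1,3,2,4][1]! := ⟨2, by norm_num⟩

lemma pat2_hmid : ∃ j, 1 < j ∧ j < 4 ∧ ([1,3,4,2] : List ℕ)[0]! < [1,3,4,2][j]! ∧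
    ([1,3,4,2] : List ℕ)[j]! < [1,3,4,2][1]! := ⟨3, by norm_num⟩

lemma contains_iff_img (i : ℕ) (t p : List ℕ) (ht : (i+1) ∉ t) (hp4 : p.length = 4)
    (h0 : ∀ j, 0 < j → j < 4 → p[0]! < p[j]!)
    (hmid : ∃ j, 1 < j ∧ j < 4 ∧ p[0]! < p[j]! ∧ p[j]! < p[1]!) :
    ContainsPat (i::(i+1)::t) p ↔ ContainsPat (reduceGt i (i::t)) p := by
  rw [transfer i t p hp4 h0 hmid, contains_reduce_iff i (i::t) p]
  intro x hx
  rcases List.mem_cons.mp hx with h | h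
  · omega
  · intro hh; exact ht (hh ▸ h)

lemma perm_forward {n i : ℕ} (h1 : 1 ≤ i) (h2 : i ≤ n-1) (hn : 2 ≤ n) {t : List ℕ}
    (hperm : IsPermList n (i::(i+1)::t)) : IsPermList (n-1) (reduceGt i (i::t)) := by
  have hmem : (i+1) ∈ (List.range n).map (· + 1) := by
    simp only [List.mem_map, List.mem_range]
    exact ⟨i, by omega, rfl⟩
  have hswap : ((i+1)::i::t).Perm (i::(i+1)::t) := List.Perm.swap i (i+1) t
  have h3 : ((i+1)::(i::t)).Perm ((i+1) :: ((List.range n).map (· + 1)).erase (i+1)) :=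
    (hswap.trans hperm).trans (List.perm_cons_erase hmem)
  have h5 := h3.cons_inv.map (fun x => if i < x then x - 1 else x)
  unfold IsPermList
  rw [← perm_reduce n i h1 h2 hn]
  exact h5

lemma perm_backward {n i : ℕ} (h1 : 1 ≤ i) (h2 : i ≤ n-1) (hn : 2 ≤ n) {u : List ℕ}
    (hperm : IsPermList (n-1) (i::u)) : IsPermList n (i::(i+1)::unreduceGt i u) := by
  have hmem : (i+1) ∈ (List.range n).map (· + 1) := by
    simp only [List.mem_map, List.mem_range]
    exact ⟨i, by omega, rfl⟩
  have hner : ∀ x ∈ ((List.range n).map (· + 1)).erase (i+1), x ≠ i+1 :=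
    fun x hx => ((nodup_base n).mem_erase_iff.mp hx).1
  have hkey : unreduceGt i ((List.range (n-1)).map (· + 1))
      = ((List.range n).map (· + 1)).erase (i+1) := by
    rw [← perm_reduce n i h1 h2 hn, unred_red _ _ hner]
  have h3 : (unreduceGt i (i::u)).Perm (((List.range n).map (· + 1)).erase (i+1)) := by
    rw [← hkey]; exact hperm.map _
  have h4 : unreduceGt i (i::u) = i :: unreduceGt i u := by
    simp [unreduceGt]
  rw [h4] at h3
  exact ((List.Perm.swap (i+1) i _).trans ((h3.cons (i+1)).trans
    (List.perm_cons_erase hmem).symm))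

lemma red_cons (i : ℕ) (t : List ℕ) : reduceGt i (i::t) = i :: reduceGt i t := by
  simp [reduceGt]


/-- Deleting the second letter `i+1` and reducing letters above `i` is a
descent-preserving bijection from `{1324,1342}`-avoiders of `[n]` starting
`i, i+1` onto `{1324,1342}`-avoiders of `[n-1]` starting with `i`. -/
theorem stmt10 (n i : ℕ) (hn : 2 ≤ n) (hi1 : 1 ≤ i) (hi : i ≤ n - 1) :
    Set.BijOn (fun π : List ℕ => reduceGt i (π.eraseIdx 1))
      {π : List ℕ | IsPermList n π ∧ AvoidsPat π [1,3,2,4] ∧ AvoidsPat π [1,3,4,2] ∧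
        π[0]! = i ∧ π[1]! = i + 1}
      {σ : List ℕ | IsPermList (n - 1) σ ∧ AvoidsPat σ [1,3,2,4] ∧
        AvoidsPat σ [1,3,4,2] ∧ σ[0]! = i} ∧
    ∀ π ∈ {π : List ℕ | IsPermList n π ∧ AvoidsPat π [1,3,2,4] ∧ AvoidsPat π [1,3,4,2] ∧
        π[0]! = i ∧ π[1]! = i + 1},
      descList π = descList (reduceGt i (π.eraseIdx 1)) := by
  constructor
  · refine ⟨?_, ?_, ?_⟩
    · -- MapsTo
      rintro π ⟨hperm, hav1, hav2, h0, h1⟩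
      obtain ⟨t, rfl⟩ := exists_struct hn hperm h0 h1
      have hnd := nodup_of_perm hperm
      simp only [List.nodup_cons, List.mem_cons] at hnd
      have hti1 : (i+1) ∉ t := fun h => hnd.2.1 h
      have herase : ((i::(i+1)::t).eraseIdx 1) = i :: t := rfl
      simp only [Set.mem_setOf_eq, herase]
      refine ⟨perm_forward hi1 hi hn hperm, ?_, ?_, by rw [red_cons]; simp⟩
      · intro hc
        exact hav1 ((contains_iff_img i t [1,3,2,4] hti1 rfl pat1_h0 pat1_hmid).mpr hc)
      · intro hc
        exact hav2 ((contains_iff_img i t [1,3,4,2] hti1 rfl pat2_h0 pat2_hmid).mpr hc)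
    · -- InjOn
      rintro π₁ ⟨hperm₁, _, _, h01, h11⟩ π₂ ⟨hperm₂, _, _, h02, h12⟩ heq
      obtain ⟨t₁, rfl⟩ := exists_struct hn hperm₁ h01 h11
      obtain ⟨t₂, rfl⟩ := exists_struct hn hperm₂ h02 h12
      have hnd₁ := nodup_of_perm hperm₁
      have hnd₂ := nodup_of_perm hperm₂
      simp only [List.nodup_cons, List.mem_cons] at hnd₁ hnd₂
      simp only [red_cons] at heq
      have : reduceGt i t₁ = reduceGt i t₂ := by
        have := congrArg List.tail heq
        simpa [red_cons] using this
      have ht : t₁ = t₂ := by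
        rw [← unred_red i t₁ (fun x hx hh => hnd₁.2.1 (hh ▸ hx)),
          ← unred_red i t₂ (fun x hx hh => hnd₂.2.1 (hh ▸ hx)), this]
      rw [ht]
    · -- SurjOn
      rintro σ ⟨hperm', hav1', hav2', h0'⟩
      have hlen : σ.length = n - 1 := by simpa using hperm'.length_eq
      obtain ⟨u, rfl⟩ : ∃ u, σ = i :: u := by
        match σ, hlen with
        | [], hlen => simp at hlen; omega
        | a :: u, _ =>
          simp only [List.getElem!_cons_zero] at h0'
          exact ⟨u, by rw [h0']⟩
      refine ⟨i::(i+1)::unreduceGt i u, ?_, ?_⟩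
      · -- membership in source set
        have hne : ∀ x ∈ unreduceGt i u, x ≠ i + 1 := by
          intro x hx
          simp only [unreduceGt, List.mem_map] at hx
          obtain ⟨y, _, rfl⟩ := hx
          exact unred_ne i y
        have himg : reduceGt i (((i::(i+1)::unreduceGt i u).eraseIdx 1)) = i :: u := by
          show reduceGt i (i :: unreduceGt i u) = i :: u
          rw [red_cons, red_unred]
        refine ⟨perm_backward hi1 hi hn hperm', ?_, ?_, by simp, by simp⟩
        · intro hc
          apply hav1'
          have h2 := (contains_iff_img i (unreduceGt i u) [1,3,2,4]
            (fun h => (hne _ h) rfl) rfl pat1_h0 pat1_hmid).mp hc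
          rwa [red_cons, red_unred] at h2
        · intro hc
          apply hav2'
          have h2 := (contains_iff_img i (unreduceGt i u) [1,3,4,2]
            (fun h => (hne _ h) rfl) rfl pat2_h0 pat2_hmid).mp hc
          rwa [red_cons, red_unred] at h2
      · show reduceGt i (((i::(i+1)::unreduceGt i u).eraseIdx 1)) = i :: u
        rw [show ((i::(i+1)::unreduceGt i u).eraseIdx 1) = i :: unreduceGt i u from rfl,
          red_cons, red_unred]
  · -- descents
    rintro π ⟨hperm, _, _, h0, h1⟩
    obtain ⟨t, rfl⟩ := exists_struct hn hperm h0 h1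
    have hnd := nodup_of_perm hperm
    simp only [List.nodup_cons, List.mem_cons] at hnd
    have := desc_main i t (fun h => hnd.1 (Or.inr h)) hnd.2.1
    rw [show ((i::(i+1)::t).eraseIdx 1) = i :: t from rfl, red_cons]
    exact this
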